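/- In the canonical μIS5-model, the relation ≡_c is backward confluent with respect to ⊆: if Γ ≡_c Δ and Δ ⊆ Σ for μIS5-theories Γ, Δ, Σ, then there exists a μIS5-theory Φ with Γ ⊆ Φ and Φ ≡_c Σ. -/

import Mathlib

/-- Constructive μ-formulas. -/
inductive Fml : Type where
  | prop : ℕ → Fml
  | var : ℕ → Fml
  | bot : Fml
  | top : Fml
  | neg : Fml → Fml
  | and : Fml → Fml → Fml
  | or : Fml → Fml → Fml
  | imp : Fml → Fml → Fml
  | box : Fml → Fml
  | dia : Fml → Fml
  | mu : ℕ → Fml → Fml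
  | nu : ℕ → Fml → Fml

mutual
  /-- `X` occurs only positively in `φ`. -/
  inductive PosIn : ℕ → Fml → Prop where
    | prop {x p} : PosIn x (.prop p)
    | bot {x} : PosIn x .bot
    | top {x} : PosIn x .top
    | var {x} : PosIn x (.var x)
    | varNe {x y} : x ≠ y → PosIn x (.var y)
    | neg {x φ} : NegIn x φ → PosIn x (.neg φ)
    | and {x φ ψ} : PosIn x φ → PosIn x ψ → PosIn x (.and φ ψ)
    | or {x φ ψ} : PosIn x φ → PosIn x ψ → PosIn x (.or φ ψ)
    | imp {x φ ψ} : NegIn x φ → PosIn x ψ → PosIn x (.imp φ ψ)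
    | box {x φ} : PosIn x φ → PosIn x (.box φ)
    | dia {x φ} : PosIn x φ → PosIn x (.dia φ)
    | muSelf {x φ} : PosIn x (.mu x φ)
    | mu {x y φ} : x ≠ y → PosIn x φ → PosIn x (.mu y φ)
    | nuSelf {x φ} : PosIn x (.nu x φ)
    | nu {x y φ} : x ≠ y → PosIn x φ → PosIn x (.nu y φ)
  /-- `X` occurs only negatively in `φ`. -/
  inductive NegIn : ℕ → Fml → Prop where
    | prop {x p} : NegIn x (.prop p)
    | bot {x} : NegIn x .bot
    | top {x} : NegIn x .top
    | varNe {x y} : x ≠ y → NegIn x (.var y)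
    | neg {x φ} : PosIn x φ → NegIn x (.neg φ)
    | and {x φ ψ} : NegIn x φ → NegIn x ψ → NegIn x (.and φ ψ)
    | or {x φ ψ} : NegIn x φ → NegIn x ψ → NegIn x (.or φ ψ)
    | imp {x φ ψ} : PosIn x φ → NegIn x ψ → NegIn x (.imp φ ψ)
    | box {x φ} : NegIn x φ → NegIn x (.box φ)
    | dia {x φ} : NegIn x φ → NegIn x (.dia φ)
    | muSelf {x φ} : NegIn x (.mu x φ)
    | mu {x y φ} : x ≠ y → NegIn x φ → NegIn x (.mu y φ)
    | nuSelf {x φ} : NegIn x (.nu x φ)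
    | nu {x y φ} : x ≠ y → NegIn x φ → NegIn x (.nu y φ)
end

/-- Bi-relational CK-models of Mendler and de Paiva. -/
structure CKModel (W : Type) where
  fall : Set W
  le : W → W → Prop
  R : W → W → Prop
  V : ℕ → Set W
  le_refl : ∀ w, le w w
  le_trans : ∀ {w v u}, le w v → le v u → le w u
  persist : ∀ p {w v}, le w v → w ∈ V p → v ∈ V p
  fall_V : ∀ p, fall ⊆ V p
  fall_le : ∀ {w v}, w ∈ fall → le w v → v ∈ fall
  fall_R : ∀ {w v}, w ∈ fall → R w v → v ∈ fall

/-- Bi-relational semantics with an environment `ρ` for the variables.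
Fixed points are interpreted via Knaster–Tarski. -/
def sem {W : Type} (M : CKModel W) : (ℕ → Set W) → Fml → Set W
  | ρ, .prop p => M.V p
  | ρ, .var x => ρ x
  | _, .bot => M.fall
  | _, .top => Set.univ
  | ρ, .neg φ => {w | ∀ v, M.le w v → v ∉ sem M ρ φ}
  | ρ, .and φ ψ => sem M ρ φ ∩ sem M ρ ψ
  | ρ, .or φ ψ => sem M ρ φ ∪ sem M ρ ψ
  | ρ, .imp φ ψ => {w | ∀ v, M.le w v → v ∈ sem M ρ φ → v ∈ sem M ρ ψ}
  | ρ, .box φ => {w | ∀ v u, M.le w v → M.R v u → u ∈ sem M ρ φ}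
  | ρ, .dia φ => {w | ∀ v, M.le w v → ∃ u, M.R v u ∧ u ∈ sem M ρ φ}
  | ρ, .mu x φ => ⋂₀ {A | sem M (Function.update ρ x A) φ ⊆ A}
  | ρ, .nu x φ => ⋃₀ {A | A ⊆ sem M (Function.update ρ x A) φ}

/-- IS5-models: CK-models with no fallible worlds, whose modal relation is an
equivalence relation that is forward and backward confluent with `⪯`. -/
structure IS5Model (W : Type) extends CKModel W where
  fall_empty : fall = ∅
  R_equiv : Equivalence R
  forward : ∀ {w v w'}, R w v → le w w' → ∃ v', le v v' ∧ R w' v'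
  backward : ∀ {w v v'}, R w v → le v v' → ∃ w', le w w' ∧ R w' v'

/-- Ordinal-indexed approximants of a least fixed point. -/
noncomputable def muApprox {W : Type} (Γ : Set W → Set W) (α : Ordinal) : Set W :=
  Ordinal.limitRecOn α ∅ (fun _ A => Γ A) (fun o _ ih => ⋃ β : Set.Iio o, ih β.1 β.2)

/-- Ordinal-indexed approximants of a greatest fixed point. -/
noncomputable def nuApprox {W : Type} (Γ : Set W → Set W) (α : Ordinal) : Set W :=
  Ordinal.limitRecOn α Set.univ (fun _ A => Γ A) (fun o _ ih => ⋂ β : Set.Iio o, ih β.1 β.2)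

/-- `φ` is a modal formula: it contains no fixed-point operators. -/
def NoFix : Fml → Prop
  | .mu _ _ => False
  | .nu _ _ => False
  | .neg φ => NoFix φ
  | .box φ => NoFix φ
  | .dia φ => NoFix φ
  | .and φ ψ => NoFix φ ∧ NoFix ψ
  | .or φ ψ => NoFix φ ∧ NoFix ψ
  | .imp φ ψ => NoFix φ ∧ NoFix ψ
  | _ => True

/-- Number of free occurrences of the variable `x` in a formula. -/
def varCount (x : ℕ) : Fml → ℕ
  | .var y => if y = x then 1 else 0
  | .neg φ => varCount x φ
  | .box φ => varCount x φ
  | .dia φ => varCount x φ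
  | .and φ ψ => varCount x φ + varCount x ψ
  | .or φ ψ => varCount x φ + varCount x ψ
  | .imp φ ψ => varCount x φ + varCount x ψ
  | .mu y φ => if y = x then 0 else varCount x φ
  | .nu y φ => if y = x then 0 else varCount x φ
  | _ => 0

/-- A formula is closed iff it has no free variables. -/
def Closed (φ : Fml) : Prop := ∀ x, varCount x φ = 0

/-- Well-formedness: every fixed-point operator binds a positive variable. -/
def WF : Fml → Prop
  | .mu x φ => PosIn x φ ∧ WF φ
  | .nu x φ => PosIn x φ ∧ WF φ
  | .neg φ => WF φ
  | .box φ => WF φ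
  | .dia φ => WF φ
  | .and φ ψ => WF φ ∧ WF ψ
  | .or φ ψ => WF φ ∧ WF ψ
  | .imp φ ψ => WF φ ∧ WF ψ
  | _ => True

/-- Substitution of the formula `σ` for the free occurrences of the variable `x`. -/
def subst (x : ℕ) (σ : Fml) : Fml → Fml
  | .var y => if y = x then σ else .var y
  | .prop p => .prop p
  | .bot => .bot
  | .top => .top
  | .neg φ => .neg (subst x σ φ)
  | .and φ ψ => .and (subst x σ φ) (subst x σ ψ)
  | .or φ ψ => .or (subst x σ φ) (subst x σ ψ)
  | .imp φ ψ => .imp (subst x σ φ) (subst x σ ψ)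
  | .box φ => .box (subst x σ φ)
  | .dia φ => .dia (subst x σ φ)
  | .mu y φ => if y = x then .mu y φ else .mu y (subst x σ φ)
  | .nu y φ => if y = x then .nu y φ else .nu y (subst x σ φ)

def Fml.iff (φ ψ : Fml) : Fml := .and (.imp φ ψ) (.imp ψ φ)

/-- The axioms of μIS5: intuitionistic axioms, the modal axioms
K□, K◇, FS, DP, N, T, 4, 5, and the fixed-point axioms νFP and μFP. -/
inductive Ax : Fml → Prop where
  | k1 (φ ψ) : Ax (.imp φ (.imp ψ φ))
  | k2 (φ ψ χ) : Ax (.imp (.imp φ (.imp ψ χ)) (.imp (.imp φ ψ) (.imp φ χ)))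
  | andI (φ ψ) : Ax (.imp φ (.imp ψ (.and φ ψ)))
  | andE1 (φ ψ) : Ax (.imp (.and φ ψ) φ)
  | andE2 (φ ψ) : Ax (.imp (.and φ ψ) ψ)
  | orI1 (φ ψ) : Ax (.imp φ (.or φ ψ))
  | orI2 (φ ψ) : Ax (.imp ψ (.or φ ψ))
  | orE (φ ψ χ) : Ax (.imp (.imp φ χ) (.imp (.imp ψ χ) (.imp (.or φ ψ) χ)))
  | botE (φ) : Ax (.imp .bot φ)
  | topI : Ax .top
  | negI (φ) : Ax (.imp (.imp φ .bot) (.neg φ))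
  | negE (φ) : Ax (.imp (.neg φ) (.imp φ .bot))
  | kBox (φ ψ) : Ax (.imp (.box (.imp φ ψ)) (.imp (.box φ) (.box ψ)))
  | kDia (φ ψ) : Ax (.imp (.box (.imp φ ψ)) (.imp (.dia φ) (.dia ψ)))
  | fs (φ ψ) : Ax (.imp (.imp (.dia φ) (.box ψ)) (.box (.imp φ ψ)))
  | dp (φ ψ) : Ax (.imp (.dia (.or φ ψ)) (.or (.dia φ) (.dia ψ)))
  | n : Ax (.neg (.dia .bot))
  | t1 (φ) : Ax (.imp (.box φ) φ)
  | t2 (φ) : Ax (.imp φ (.dia φ))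
  | four1 (φ) : Ax (.imp (.box φ) (.box (.box φ)))
  | four2 (φ) : Ax (.imp (.dia (.dia φ)) (.dia φ))
  | five1 (φ) : Ax (.imp (.dia φ) (.box (.dia φ)))
  | five2 (φ) : Ax (.imp (.dia (.box φ)) (.box φ))
  | nuFP (x φ) : PosIn x φ → Ax (.imp (.nu x φ) (subst x (.nu x φ) φ))
  | muFP (x φ) : PosIn x φ → Ax (.imp (subst x (.mu x φ) φ) (.mu x φ))

/-- Provability in μIS5: closure of the axioms under modus ponens,
necessitation, and the two fixed-point induction rules. -/
inductive Prov : Fml → Prop where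
  | ax {φ} : Ax φ → Prov φ
  | mp {φ ψ} : Prov (.imp φ ψ) → Prov φ → Prov ψ
  | nec {φ} : Prov φ → Prov (.box φ)
  | nuInd {x φ ψ} : PosIn x φ → Prov (.imp ψ (subst x ψ φ)) → Prov (.imp ψ (.nu x φ))
  | muInd {x φ ψ} : PosIn x φ → Prov (.imp (subst x ψ φ) ψ) → Prov (.imp (.mu x φ) ψ)

/-- μIS5-theories: contain all axioms, closed under modus ponens,
consistent, and with the disjunction property. -/
structure IsTheory (Γ : Set Fml) : Prop where
  ax_mem : ∀ φ, Ax φ → φ ∈ Γ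
  mp_closed : ∀ φ ψ, Fml.imp φ ψ ∈ Γ → φ ∈ Γ → ψ ∈ Γ
  bot_not_mem : Fml.bot ∉ Γ
  disj : ∀ φ ψ, Fml.or φ ψ ∈ Γ → φ ∈ Γ ∨ ψ ∈ Γ

def diaSet (Γ : Set Fml) : Set Fml := {φ | Fml.dia φ ∈ Γ}
def boxSet (Γ : Set Fml) : Set Fml := {φ | Fml.box φ ∈ Γ}

/-- The canonical modal relation on μIS5-theories. -/
def equivC (Γ Δ : Set Fml) : Prop := Δ ⊆ diaSet Γ ∧ boxSet Γ ⊆ Δ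


/-- Nec-free derivability from hypotheses: hypotheses, axioms, modus ponens. -/
inductive Der (S : Set Fml) : Fml → Prop where
  | hyp {φ} : φ ∈ S → Der S φ
  | ax {φ} : Ax φ → Der S φ
  | mp {φ ψ} : Der S (.imp φ ψ) → Der S φ → Der S ψ

lemma Der.mono {S T : Set Fml} {φ} (h : Der S φ) (hST : S ⊆ T) : Der T φ := by
  induction h with
  | hyp h => exact .hyp (hST h)
  | ax h => exact .ax h
  | mp _ _ ih1 ih2 => exact .mp ih1 ih2

lemma der_self (S : Set Fml) (A : Fml) : Der S (.imp A A) :=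
  ((Der.ax (Ax.k2 A (.imp A A) A)).mp (.ax (Ax.k1 A (.imp A A)))).mp (.ax (Ax.k1 A A))

lemma der_deduction {S : Set Fml} {A φ} (h : Der (S ∪ {A}) φ) : Der S (.imp A φ) := by
  induction h with
  | hyp h =>
    rcases h with h | h
    · exact (Der.ax (Ax.k1 _ A)).mp (.hyp h)
    · cases h; exact der_self S A
  | ax h => exact (Der.ax (Ax.k1 _ A)).mp (.ax h)
  | mp _ _ ih1 ih2 => exact ((Der.ax (Ax.k2 A _ _)).mp ih1).mp ih2

lemma der_trans {S : Set Fml} {X Y Z : Fml}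
    (h1 : Der S (.imp X Y)) (h2 : Der S (.imp Y Z)) : Der S (.imp X Z) :=
  ((Der.ax (Ax.k2 X Y Z)).mp ((Der.ax (Ax.k1 _ X)).mp h2)).mp h1

lemma der_finite {S : Set Fml} {φ} (h : Der S φ) :
    ∃ L : List Fml, (∀ ψ ∈ L, ψ ∈ S) ∧ Der {ψ | ψ ∈ L} φ := by
  induction h with
  | hyp h => exact ⟨[_], by simpa using h, .hyp (by simp)⟩
  | ax h => exact ⟨[], by simp, .ax h⟩
  | mp _ _ ih1 ih2 =>
    obtain ⟨L1, h1, d1⟩ := ih1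
    obtain ⟨L2, h2, d2⟩ := ih2
    refine ⟨L1 ++ L2, ?_, .mp (d1.mono ?_) (d2.mono ?_)⟩
    · intro ψ hψ; rcases List.mem_append.1 hψ with h | h
      · exact h1 ψ h
      · exact h2 ψ h
    · intro x hx; simp only [Set.mem_setOf_eq, List.mem_append] at *; exact Or.inl hx
    · intro x hx; simp only [Set.mem_setOf_eq, List.mem_append] at *; exact Or.inr hx

lemma der_collapse {S : Set Fml} {φ} (h : Der {χ | Der S χ} φ) : Der S φ := by
  induction h with
  | hyp h => exact h
  | ax h => exact .ax h
  | mp _ _ ih1 ih2 => exact .mp ih1 ih2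

lemma der_mem_theory {Γ : Set Fml} (hΓ : IsTheory Γ) {φ} (h : Der Γ φ) : φ ∈ Γ := by
  induction h with
  | hyp h => exact h
  | ax h => exact hΓ.ax_mem _ h
  | mp _ _ ih1 ih2 => exact hΓ.mp_closed _ _ ih1 ih2

/-- The set of diamonds of a list. -/
def diaList (l : List Fml) : Set Fml := {ψ | ∃ σ ∈ l, ψ = Fml.dia σ}

/-- Key base lemma: derivations of boxed formulas from Γ plus diamonds of
members of Σ force membership in Σ, via the FS axiom. -/
lemma der_box_base {Γ Sg : Set Fml} (hΓ : IsTheory Γ) (hSg : IsTheory Sg)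
    (hbox : boxSet Γ ⊆ Sg) :
    ∀ l : List Fml, (∀ σ ∈ l, σ ∈ Sg) →
      ∀ φ, Der (Γ ∪ diaList l) (Fml.box φ) → φ ∈ Sg := by
  intro l
  induction l with
  | nil =>
    intro _ φ h
    have hG : Der Γ (Fml.box φ) := by
      refine h.mono ?_
      intro x hx
      rcases hx with hx | hx
      · exact hx
      · rcases hx with ⟨σ, hσ, _⟩; simp at hσ
    exact hbox (der_mem_theory hΓ hG)
  | cons σ l ih =>
    intro hmem φ h
    have h' : Der ((Γ ∪ diaList l) ∪ {Fml.dia σ}) (Fml.box φ) := by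
      refine h.mono ?_
      intro x hx
      rcases hx with hx | ⟨τ, hτ, rfl⟩
      · exact Or.inl (Or.inl hx)
      · rcases List.mem_cons.1 hτ with rfl | hτ
        · exact Or.inr rfl
        · exact Or.inl (Or.inr ⟨τ, hτ, rfl⟩)
    have h2 : Der (Γ ∪ diaList l) (.imp (.dia σ) (.box φ)) := der_deduction h'
    have h3 : Der (Γ ∪ diaList l) (.box (.imp σ φ)) := (Der.ax (Ax.fs σ φ)).mp h2
    have h4 : Fml.imp σ φ ∈ Sg := ih (fun τ hτ => hmem τ (List.mem_cons_of_mem _ hτ)) _ h3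
    exact hSg.mp_closed _ _ h4 (hmem σ (List.mem_cons_self))

lemma split_list (Γ Sg : Set Fml) :
    ∀ L : List Fml, (∀ ψ ∈ L, ψ ∈ Γ ∪ {ψ | ∃ σ ∈ Sg, ψ = Fml.dia σ}) →
      ∃ l : List Fml, (∀ σ ∈ l, σ ∈ Sg) ∧ {ψ | ψ ∈ L} ⊆ Γ ∪ diaList l := by
  intro L
  induction L with
  | nil => exact fun _ => ⟨[], by simp, by intro x hx; simp at hx⟩
  | cons ψ L ih =>
    intro hmem
    obtain ⟨l, hl, hsub⟩ := ih (fun χ hχ => hmem χ (List.mem_cons_of_mem _ hχ))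
    rcases hmem ψ (List.mem_cons_self) with hψ | ⟨σ, hσ, rfl⟩
    · refine ⟨l, hl, ?_⟩
      intro x hx
      rcases List.mem_cons.1 hx with rfl | hx
      · exact Or.inl hψ
      · exact hsub hx
    · refine ⟨σ :: l, ?_, ?_⟩
      · intro τ hτ; rcases List.mem_cons.1 hτ with rfl | hτ
        · exact hσ
        · exact hl τ hτ
      · intro x hx
        rcases List.mem_cons.1 hx with rfl | hx
        · exact Or.inr ⟨σ, (List.mem_cons_self), rfl⟩
        · rcases hsub hx with h | ⟨τ, hτ, rfl⟩
          · exact Or.inl h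
          · exact Or.inr ⟨τ, List.mem_cons_of_mem _ hτ, rfl⟩

lemma list_in_chain {c : Set (Set Fml)} (hch : IsChain (· ⊆ ·) c)
    {s : Set Fml} (hs : s ∈ c) :
    ∀ L : List Fml, (∀ ψ ∈ L, ψ ∈ ⋃₀ c) → ∃ t ∈ c, ∀ ψ ∈ L, ψ ∈ t := by
  intro L
  induction L with
  | nil => exact fun _ => ⟨s, hs, by simp⟩
  | cons ψ L ih =>
    intro hmem
    obtain ⟨t, htc, ht⟩ := ih (fun χ hχ => hmem χ (List.mem_cons_of_mem _ hχ))
    obtain ⟨t', ht'c, hψt'⟩ := hmem ψ (List.mem_cons_self)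
    by_cases heq : t = t'
    · subst heq
      exact ⟨t, htc, fun χ hχ => by
        rcases List.mem_cons.1 hχ with rfl | hχ
        · exact hψt'
        · exact ht χ hχ⟩
    · rcases hch htc ht'c heq with hle | hle
      · exact ⟨t', ht'c, fun χ hχ => by
          rcases List.mem_cons.1 hχ with rfl | hχ
          · exact hψt'
          · exact hle (ht χ hχ)⟩
      · exact ⟨t, htc, fun χ hχ => by
          rcases List.mem_cons.1 hχ with rfl | hχ
          · exact hle hψt'
          · exact ht χ hχ⟩

/-- `≡_c` is backward confluent with respect to inclusion of
μIS5-theories. -/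
theorem equivC_backward_confluent (Γ Δ Sg : Set Fml)
    (hΓ : IsTheory Γ) (hΔ : IsTheory Δ) (hSg : IsTheory Sg)
    (h1 : equivC Γ Δ) (h2 : Δ ⊆ Sg) :
    ∃ Φ : Set Fml, IsTheory Φ ∧ Γ ⊆ Φ ∧ equivC Φ Sg := by
  classical
  set S0 : Set Fml := Γ ∪ {ψ | ∃ σ ∈ Sg, ψ = Fml.dia σ} with hS0def
  set A : Set (Set Fml) :=
    {S | S0 ⊆ S ∧ ∀ χ, Der S (Fml.box χ) → χ ∈ Sg} with hAdef
  have hbox : boxSet Γ ⊆ Sg := fun χ hχ => h2 (h1.2 hχ)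
  -- S0 belongs to the family
  have hS0A : S0 ∈ A := by
    refine ⟨le_refl _, ?_⟩
    intro χ h
    obtain ⟨L, hL, d⟩ := der_finite h
    obtain ⟨l, hl, hsub⟩ := split_list Γ Sg L hL
    exact der_box_base hΓ hSg hbox l hl χ (d.mono hsub)
  -- chains have upper bounds
  have hchain : ∀ c ⊆ A, IsChain (· ⊆ ·) c → c.Nonempty →
      ∃ ub ∈ A, ∀ s ∈ c, s ⊆ ub := by
    rintro c hc hch ⟨s, hs⟩
    refine ⟨⋃₀ c, ⟨(hc hs).1.trans (Set.subset_sUnion_of_mem hs), ?_⟩,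
      fun t ht => Set.subset_sUnion_of_mem ht⟩
    intro χ h
    obtain ⟨L, hL, d⟩ := der_finite h
    obtain ⟨t, htc, ht⟩ := list_in_chain hch hs L hL
    exact (hc htc).2 χ (d.mono (fun x hx => ht x hx))
  obtain ⟨Φ, hS0Φ, hΦmax⟩ := zorn_subset_nonempty A hchain S0 hS0A
  have hΦA : Φ ∈ A := hΦmax.prop
  -- Φ is deductively closed
  have hclosed : ∀ χ, Der Φ χ → χ ∈ Φ := by
    intro χ h
    have hDA : {χ | Der Φ χ} ∈ A :=
      ⟨hΦA.1.trans (fun x hx => Der.hyp hx), fun χ' h' => hΦA.2 χ' (der_collapse h')⟩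
    exact hΦmax.2 hDA (fun x hx => Der.hyp hx) h
  have hinv : ∀ χ, Fml.box χ ∈ Φ → χ ∈ Sg := fun χ h => hΦA.2 χ (.hyp h)
  refine ⟨Φ, ?_, fun x hx => hΦA.1 (Or.inl hx),
    fun σ hσ => hΦA.1 (Or.inr ⟨σ, hσ, rfl⟩), fun χ hχ => hinv χ hχ⟩
  refine ⟨fun φ h => hclosed _ (.ax h),
    fun φ ψ hi hp => hclosed _ ((Der.hyp hi).mp (.hyp hp)), ?_, ?_⟩
  · intro h
    have : Fml.box .bot ∈ Φ := hclosed _ ((Der.ax (Ax.botE _)).mp (.hyp h))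
    exact hSg.bot_not_mem (hinv _ this)
  · intro φ ψ hor
    by_contra hcon
    push_neg at hcon
    obtain ⟨hφ, hψ⟩ := hcon
    have hviol : ∀ θ, θ ∉ Φ → ∃ χ, Der (Φ ∪ {θ}) (Fml.box χ) ∧ χ ∉ Sg := by
      intro θ hθ
      by_contra hA'
      push_neg at hA'
      have hmem : Φ ∪ {θ} ∈ A :=
        ⟨hΦA.1.trans Set.subset_union_left,
         fun χ h => hA' χ h⟩
      exact hθ (hΦmax.2 hmem Set.subset_union_left (Or.inr rfl))
    obtain ⟨χ₁, hd1, hχ1⟩ := hviol φ hφ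
    obtain ⟨χ₂, hd2, hχ2⟩ := hviol ψ hψ
    set C : Fml := .or (.box χ₁) (.box χ₂) with hCdef
    have hC1 : Der Φ (.imp φ C) :=
      der_trans (der_deduction hd1) (.ax (Ax.orI1 _ _))
    have hC2 : Der Φ (.imp ψ C) :=
      der_trans (der_deduction hd2) (.ax (Ax.orI2 _ _))
    have hC : Der Φ C :=
      (((Der.ax (Ax.orE φ ψ C)).mp hC1).mp hC2).mp (.hyp hor)
    have hboxdC : Der Φ (.box (.dia C)) :=
      (Der.ax (Ax.five1 C)).mp ((Der.ax (Ax.t2 C)).mp hC)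
    have hdCS : Fml.dia C ∈ Sg := hΦA.2 _ hboxdC
    have hsplit : Fml.dia (.box χ₁) ∈ Sg ∨ Fml.dia (.box χ₂) ∈ Sg :=
      hSg.disj _ _ (hSg.mp_closed _ _ (hSg.ax_mem _ (Ax.dp _ _)) hdCS)
    rcases hsplit with hS | hS
    · exact hχ1 (hSg.mp_closed _ _ (hSg.ax_mem _ (Ax.t1 χ₁))
        (hSg.mp_closed _ _ (hSg.ax_mem _ (Ax.five2 χ₁)) hS))
    · exact hχ2 (hSg.mp_closed _ _ (hSg.ax_mem _ (Ax.t1 χ₂))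
        (hSg.mp_closed _ _ (hSg.ax_mem _ (Ax.five2 χ₂)) hS))
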